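/- Let q > 1 be real, D = diag(q, −q⁻¹), and U = ((1/[2]_q, √[3]_q/[2]_q), (−√[3]_q/[2]_q, 1/[2]_q)). Then the matrix M = D·(U·D²·Uᵀ) satisfies trace(M) = 0 and det(M) = −1; consequently M² = 1 and the eigenvalues of M are +1 and −1. -/

import Mathlib

open Matrix

/-- The quantum integer `[n]_q = (qⁿ − q⁻ⁿ)/(q − q⁻¹)`. -/
noncomputable def qn (q : ℝ) (n : ℤ) : ℝ := (q ^ n - q ^ (-n)) / (q - q⁻¹)

/-- The diagonal R-matrix `D = diag(q, −q⁻¹)`. -/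
noncomputable def Dmat (q : ℝ) : Matrix (Fin 2) (Fin 2) ℝ := !![q, 0; 0, -q⁻¹]

/-- The mixing (Racah) matrix `U`. -/
noncomputable def Umat (q : ℝ) : Matrix (Fin 2) (Fin 2) ℝ :=
  !![1 / qn q 2, Real.sqrt (qn q 3) / qn q 2;
     -Real.sqrt (qn q 3) / qn q 2, 1 / qn q 2]

lemma transpose_fin_two' (a b c d : ℝ) : (!![a, b; c, d])ᵀ = !![a, c; b, d] := by
  ext i j
  fin_cases i <;> fin_cases j <;> simp

lemma key_involution (a b c : ℝ) (h : a ^ 2 + b * c = 1) :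
    (!![a, b; c, -a]).trace = 0 ∧ (!![a, b; c, -a]).det = -1 ∧
    (!![a, b; c, -a]) ^ 2 = 1 := by
  refine ⟨by simp [Matrix.trace_fin_two_of], ?_, ?_⟩
  · rw [Matrix.det_fin_two_of]; nlinarith [h]
  · rw [pow_two, Matrix.mul_fin_two]
    ext i j
    fin_cases i <;> fin_cases j <;>
      simp [Matrix.one_apply] <;> nlinarith [h]

set_option maxHeartbeats 1000000 in
/-- `M = D·(U·D²·Uᵀ)` satisfies `trace M = 0`, `det M = −1`,
and consequently `M² = 1` (its eigenvalues are `+1` and `−1`). -/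
theorem word_one_two_involution (q : ℝ) (hq : 1 < q) :
    (Dmat q * (Umat q * Dmat q ^ 2 * (Umat q)ᵀ)).trace = 0 ∧
    (Dmat q * (Umat q * Dmat q ^ 2 * (Umat q)ᵀ)).det = -1 ∧
    (Dmat q * (Umat q * Dmat q ^ 2 * (Umat q)ᵀ)) ^ 2 = 1 := by
  have hq0 : (0:ℝ) < q := lt_trans one_pos hq
  have hne : q ≠ 0 := ne_of_gt hq0
  have hinv : q⁻¹ < 1 := by rw [inv_lt_one_iff₀]; right; exact hq
  have hinv0 : (0:ℝ) < q⁻¹ := inv_pos.mpr hq0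
  have hd : q - q⁻¹ ≠ 0 := by nlinarith
  have h2 : qn q 2 = q + q⁻¹ := by
    simp only [qn, _root_.zpow_neg, zpow_ofNat]
    rw [div_eq_iff hd]; field_simp; ring_nf
  have h3 : qn q 3 = q ^ 2 + 1 + q⁻¹ ^ 2 := by
    simp only [qn, _root_.zpow_neg, zpow_ofNat]
    rw [div_eq_iff hd]; field_simp; ring_nf
  have h2pos : (0:ℝ) < qn q 2 := by rw [h2]; positivity
  have h2ne : qn q 2 ≠ 0 := ne_of_gt h2pos
  have htne : q + q⁻¹ ≠ 0 := by positivity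
  have hs : Real.sqrt (qn q 3) ^ 2 = q ^ 2 + 1 + q⁻¹ ^ 2 := by
    rw [Real.sq_sqrt (by rw [h3]; positivity), h3]
  have hs2 : q ^ 2 * Real.sqrt (qn q 3) ^ 2 = q ^ 4 + q ^ 2 + 1 := by
    rw [hs]; field_simp
  have e : q + q⁻¹ = (q ^ 2 + 1) / q := by field_simp
  have h21 : q ^ 2 + 1 ≠ 0 := by positivity
  have hM : Dmat q * (Umat q * Dmat q ^ 2 * (Umat q)ᵀ) =
      !![(q ^ 3 + (q ^ 2 + 1 + q⁻¹ ^ 2) * q⁻¹) / (q + q⁻¹) ^ 2,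
         Real.sqrt (qn q 3) * (q⁻¹ - q) * q / (q + q⁻¹);
         Real.sqrt (qn q 3) * (q - q⁻¹) * q⁻¹ / (q + q⁻¹),
         -((q ^ 3 + (q ^ 2 + 1 + q⁻¹ ^ 2) * q⁻¹) / (q + q⁻¹) ^ 2)] := by
    simp only [Dmat, Umat, pow_two, transpose_fin_two', Matrix.mul_fin_two]
    rw [h2]
    ext i j
    fin_cases i <;> fin_cases j <;>
      simp only [Matrix.cons_val', Matrix.cons_val_zero, Matrix.cons_val_one,
        Matrix.head_cons, Matrix.empty_val', Matrix.cons_val_fin_one,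
        Matrix.head_fin_const, Matrix.of_apply, Fin.mk_zero, Fin.mk_one,
        Matrix.cons_val_zero, Matrix.cons_val_one, Fin.isValue] <;>
      field_simp
    · linear_combination hs2
    · ring
    · ring
    · linear_combination (-q ^ 2) * hs2
  rw [hM]
  apply key_involution
  have hbc : (Real.sqrt (qn q 3) * (q⁻¹ - q) * q / (q + q⁻¹)) *
      (Real.sqrt (qn q 3) * (q - q⁻¹) * q⁻¹ / (q + q⁻¹)) =
      -((q ^ 2 + 1 + q⁻¹ ^ 2) * (q - q⁻¹) ^ 2 * (q * q⁻¹) / (q + q⁻¹) ^ 2) := by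
    rw [← hs]; field_simp; ring
  rw [hbc]
  field_simp
  ring
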